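/- Let Δ_1, …, Δ_r and ∇_1, …, ∇_r be dual to each other centered nef-partitions in ℝ^d. Let I_1, …, I_l be a partition of {1, …, r} into nonempty subsets, and for I ⊆ {1, …, r} set Δ^I := Σ_{i∈I} Δ_i (Minkowski sum) and ∇_I := Conv(∪_{i∈I} ∇_i). Then Δ^{I_1}, …, Δ^{I_l} is a centered nef-partition of Δ = Δ_1 + ⋯ + Δ_r of length l whose dual centered nef-partition is ∇_{I_1}, …, ∇_{I_l}; that is, for each k one has ∇_{I_k} = {y ∈ ℝ^d : ⟨x,y⟩ ≥ −δ_{kk'} for all x ∈ Δ^{I_{k'}}, k' = 1, …, l}. -/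

import Mathlib

open Pointwise

noncomputable section

/-- A point of `ℝ^n` all of whose coordinates are integers (a lattice point of `ℤ^n`). -/
def IsLatticePt {n : ℕ} (x : Fin n → ℝ) : Prop := ∀ k, ∃ m : ℤ, x k = (m : ℝ)

/-- A lattice polytope: the convex hull of finitely many lattice points. -/
def IsLatticePoly {n : ℕ} (P : Set (Fin n → ℝ)) : Prop :=
  ∃ V : Finset (Fin n → ℝ), V.Nonempty ∧ (∀ v ∈ V, IsLatticePt v) ∧
    P = convexHull ℝ (V : Set (Fin n → ℝ))

/-- The standard inner product pairing on `ℝ^n`. -/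
def pairR {n : ℕ} (x y : Fin n → ℝ) : ℝ := ∑ k, x k * y k

/-- The dual polytope `P* = {y : ⟨x,y⟩ ≥ -1 ∀ x ∈ P}`. -/
def dualPoly {n : ℕ} (P : Set (Fin n → ℝ)) : Set (Fin n → ℝ) :=
  {y | ∀ x ∈ P, -1 ≤ pairR x y}

/-- A reflexive polytope: a lattice polytope with `0` in its interior whose dual
polytope is again a lattice polytope. -/
def IsReflexivePoly {n : ℕ} (P : Set (Fin n → ℝ)) : Prop :=
  IsLatticePoly P ∧ (0 : Fin n → ℝ) ∈ interior P ∧ IsLatticePoly (dualPoly P)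

/-- The dimension of a polytope: the dimension of the direction of its affine span. -/
def polyDim {n : ℕ} (P : Set (Fin n → ℝ)) : ℕ :=
  Module.finrank ℝ (affineSpan ℝ P).direction

/-- A (full-dimensional) Gorenstein polytope of index `r`: `rP` has `m` as its unique
interior lattice point and `rP - m` is reflexive. -/
def IsGorensteinPoly {n : ℕ} (P : Set (Fin n → ℝ)) (r : ℕ) (m : Fin n → ℝ) : Prop :=
  IsLatticePoly P ∧ IsLatticePt m ∧
  (∀ x, IsLatticePt x → (x ∈ interior ((r : ℝ) • P) ↔ x = m)) ∧
  IsReflexivePoly ((fun x => x - m) '' ((r : ℝ) • P))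

/-- `y` is a point of the lattice dual to the (saturated) lattice `ℤ^n ∩ W` inside `W`. -/
def IsDualLatticePt {n : ℕ} (W : Submodule ℝ (Fin n → ℝ)) (y : Fin n → ℝ) : Prop :=
  y ∈ W ∧ ∀ x ∈ W, IsLatticePt x → ∃ m : ℤ, pairR x y = (m : ℝ)

/-- Reflexivity of a (possibly lower-dimensional) lattice polytope inside its linear
span: `0` is in the relative interior and the dual polytope taken inside the linear
span is a lattice polytope with respect to the dual lattice. -/
def IsReflexiveIn {n : ℕ} (P : Set (Fin n → ℝ)) : Prop :=
  IsLatticePoly P ∧ (0 : Fin n → ℝ) ∈ intrinsicInterior ℝ P ∧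
  ∃ V : Finset (Fin n → ℝ), V.Nonempty ∧
    (∀ v ∈ V, IsDualLatticePt (Submodule.span ℝ P) v) ∧
    {y | y ∈ Submodule.span ℝ P ∧ ∀ x ∈ P, -1 ≤ pairR x y} =
      convexHull ℝ (V : Set (Fin n → ℝ))

/-- Gorenstein polytope of index `r` (possibly lower-dimensional): `rP` has `m` as its
unique relative-interior lattice point and `rP - m` is reflexive within its span. -/
def IsGorensteinIn {n : ℕ} (P : Set (Fin n → ℝ)) (r : ℕ) (m : Fin n → ℝ) : Prop :=
  IsLatticePoly P ∧ IsLatticePt m ∧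
  (∀ x, IsLatticePt x → (x ∈ intrinsicInterior ℝ ((r : ℝ) • P) ↔ x = m)) ∧
  IsReflexiveIn ((fun x => x - m) '' ((r : ℝ) • P))

/-- The Minkowski sum `Δ 0 + ⋯ + Δ (r-1)` of a family of sets. -/
def minkSum {n r : ℕ} (Δ : Fin r → Set (Fin n → ℝ)) : Set (Fin n → ℝ) :=
  {x | ∃ f : Fin r → (Fin n → ℝ), (∀ i, f i ∈ Δ i) ∧ x = ∑ i, f i}

/-- The Minkowski sum `Σ_{i ∈ I} Δ i`. -/
def minkSumOver {n r : ℕ} (I : Finset (Fin r)) (Δ : Fin r → Set (Fin n → ℝ)) :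
    Set (Fin n → ℝ) :=
  {x | ∃ f : Fin r → (Fin n → ℝ), (∀ i ∈ I, f i ∈ Δ i) ∧ x = ∑ i ∈ I, f i}

/-- The point `x × e_i ∈ ℝ^d × ℝ^r`. -/
def cayleyPt {d r : ℕ} (x : Fin d → ℝ) (i : Fin r) : Fin (d + r) → ℝ :=
  Fin.append x (fun j => if j = i then 1 else 0)

/-- The Cayley polytope `Δ 0 * ⋯ * Δ (r-1) ⊂ ℝ^d × ℝ^r`. -/
def cayley {d r : ℕ} (Δ : Fin r → Set (Fin d → ℝ)) : Set (Fin (d + r) → ℝ) :=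
  convexHull ℝ (⋃ i, (fun x => cayleyPt x i) '' Δ i)

/-- `F` is a facet of `P`: a nonempty exposed face of dimension one less. -/
def IsFacetOf {n : ℕ} (F P : Set (Fin n → ℝ)) : Prop :=
  IsExposed ℝ P F ∧ F.Nonempty ∧ polyDim F + 1 = polyDim P

/-- A special `(r-1)`-simplex of `P`: `r` affinely independent lattice points of `P`
such that every facet of `P` contains exactly `r - 1` of them. -/
def IsSpecialSimplex {n : ℕ} (P : Set (Fin n → ℝ)) (r : ℕ) (v : Fin r → Fin n → ℝ) : Prop :=
  (∀ i, IsLatticePt (v i) ∧ v i ∈ P) ∧ AffineIndependent ℝ v ∧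
  ∀ F, IsFacetOf F P → ∃! i, v i ∉ F

/-- `∇_i = {y : ⟨x,y⟩ ≥ -δ_{ij} ∀ x ∈ Δ_j ∀ j}`, the polytopes of the dual nef-partition. -/
def nefDual {d r : ℕ} (Δ : Fin r → Set (Fin d → ℝ)) (i : Fin r) : Set (Fin d → ℝ) :=
  {y | ∀ j, ∀ x ∈ Δ j, -(if i = j then (1 : ℝ) else 0) ≤ pairR x y}

/-- A centered nef-partition: lattice polytopes containing `0` whose Minkowski sum is a
reflexive polytope with `0` as its unique interior lattice point. -/
def IsCenteredNefPartition {d r : ℕ} (Δ : Fin r → Set (Fin d → ℝ)) : Prop :=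
  (∀ i, IsLatticePoly (Δ i) ∧ (0 : Fin d → ℝ) ∈ Δ i) ∧
  IsReflexivePoly (minkSum Δ) ∧
  ∀ x, IsLatticePt x → x ∈ interior (minkSum Δ) → x = 0

/-- Two centered nef-partitions dual to each other. -/
def AreDualNefPartitions {d r : ℕ} (Δ Nb : Fin r → Set (Fin d → ℝ)) : Prop :=
  IsCenteredNefPartition Δ ∧ IsCenteredNefPartition Nb ∧
  (∀ i, Nb i = nefDual Δ i) ∧ (∀ i, Δ i = nefDual Nb i)

/-- A Gorenstein cone with its distinguished lattice point `nσ`: a full-dimensional cone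
generated by finitely many lattice points on the hyperplane `⟨·, nσ⟩ = 1`. -/
def IsGorensteinCone {n : ℕ} (σ : Set (Fin n → ℝ)) (nσ : Fin n → ℝ) : Prop :=
  IsLatticePt nσ ∧ Submodule.span ℝ σ = ⊤ ∧
  ∃ V : Finset (Fin n → ℝ), V.Nonempty ∧
    (∀ v ∈ V, IsLatticePt v ∧ pairR v nσ = 1) ∧
    σ = {x | ∃ c : (Fin n → ℝ) → ℝ, (∀ v, 0 ≤ c v) ∧ x = ∑ v ∈ V, c v • v}

/-- The dual cone. -/
def dualCone {n : ℕ} (σ : Set (Fin n → ℝ)) : Set (Fin n → ℝ) :=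
  {y | ∀ x ∈ σ, 0 ≤ pairR x y}

/-- Integrally closed lattice polytope: every lattice point of `k • P` is a sum of `k`
lattice points of `P`. -/
def IntegrallyClosed {n : ℕ} (P : Set (Fin n → ℝ)) : Prop :=
  ∀ (k : ℕ) (x : Fin n → ℝ), IsLatticePt x → x ∈ (k : ℝ) • P →
    ∃ v : Fin k → (Fin n → ℝ), (∀ j, IsLatticePt (v j) ∧ v j ∈ P) ∧ x = ∑ j, v j


section AuxCollecting

private lemma pairR_add_left' {n : ℕ} (x x' y : Fin n → ℝ) :
    pairR (x + x') y = pairR x y + pairR x' y := by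
  simp [pairR, add_mul, Finset.sum_add_distrib]

private lemma pairR_smul_left' {n : ℕ} (c : ℝ) (x y : Fin n → ℝ) :
    pairR (c • x) y = c * pairR x y := by
  simp [pairR, Finset.mul_sum, mul_assoc]

private lemma pairR_comm' {n : ℕ} (x y : Fin n → ℝ) : pairR x y = pairR y x := by
  simp [pairR, mul_comm]

private lemma pairR_zero_left' {n : ℕ} (y : Fin n → ℝ) : pairR 0 y = 0 := by
  simp [pairR]

private lemma pairR_sum_left' {n : ℕ} {ι : Type*} (s : Finset ι) (f : ι → Fin n → ℝ)
    (y : Fin n → ℝ) : pairR (∑ i ∈ s, f i) y = ∑ i ∈ s, pairR (f i) y := by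
  classical
  induction s using Finset.induction_on with
  | empty => simp [pairR]
  | @insert a s ha ih =>
      rw [Finset.sum_insert ha, Finset.sum_insert ha, pairR_add_left', ih]

private lemma pairR_combo' {n : ℕ} (a b : ℝ) (u v y : Fin n → ℝ) :
    pairR (a • u + b • v) y = a * pairR u y + b * pairR v y := by
  rw [pairR_add_left', pairR_smul_left', pairR_smul_left']

private lemma pairR_le_of_mem_convexHull' {n : ℕ} {W : Set (Fin n → ℝ)} {y : Fin n → ℝ} {c : ℝ}
    (hW : ∀ w ∈ W, c ≤ pairR w y) {x : Fin n → ℝ} (hx : x ∈ convexHull ℝ W) :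
    c ≤ pairR x y := by
  have hconv : Convex ℝ {x : Fin n → ℝ | c ≤ pairR x y} := by
    intro u hu v hv a b ha hb hab
    simp only [Set.mem_setOf_eq] at hu hv ⊢
    rw [pairR_combo']
    have h3 : a * c + b * c = c := by rw [← add_mul, hab, one_mul]
    linarith [mul_le_mul_of_nonneg_left hu ha, mul_le_mul_of_nonneg_left hv hb]
  exact convexHull_min hW hconv hx

private lemma pairR_int' {n : ℕ} {x y : Fin n → ℝ} (hx : IsLatticePt x) (hy : IsLatticePt y) :
    ∃ m : ℤ, pairR x y = (m : ℝ) := by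
  choose a ha using hx
  choose b hb using hy
  refine ⟨∑ k, a k * b k, ?_⟩
  simp [pairR, ha, hb]

private lemma isLatticePt_add' {n : ℕ} {x y : Fin n → ℝ} (hx : IsLatticePt x)
    (hy : IsLatticePt y) : IsLatticePt (x + y) := by
  intro k
  obtain ⟨a, ha⟩ := hx k
  obtain ⟨b, hb⟩ := hy k
  exact ⟨a + b, by simp [ha, hb]⟩

private lemma isLatticePoly_add' {n : ℕ} {A B : Set (Fin n → ℝ)} (hA : IsLatticePoly A)
    (hB : IsLatticePoly B) : IsLatticePoly (A + B) := by
  classical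
  obtain ⟨V, hVne, hVlat, rfl⟩ := hA
  obtain ⟨W, hWne, hWlat, rfl⟩ := hB
  refine ⟨V + W, hVne.add hWne, ?_, ?_⟩
  · intro v hv
    rw [Finset.mem_add] at hv
    obtain ⟨a, ha, b, hb, rfl⟩ := hv
    exact isLatticePt_add' (hVlat a ha) (hWlat b hb)
  · rw [Finset.coe_add, convexHull_add]

private lemma minkSumOver_empty' {d r : ℕ} (Δ : Fin r → Set (Fin d → ℝ)) :
    minkSumOver (∅ : Finset (Fin r)) Δ = {0} := by
  ext x
  constructor
  · rintro ⟨f, -, rfl⟩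
    simp
  · rintro rfl
    refine ⟨fun _ => 0, fun i hi => absurd hi (Finset.notMem_empty i), ?_⟩
    simp

private lemma minkSumOver_insert' {d r : ℕ} (Δ : Fin r → Set (Fin d → ℝ)) (a : Fin r)
    (s : Finset (Fin r)) (ha : a ∉ s) :
    minkSumOver (insert a s) Δ = Δ a + minkSumOver s Δ := by
  classical
  ext x
  constructor
  · rintro ⟨f, hf, rfl⟩
    refine ⟨f a, hf a (Finset.mem_insert_self a s), ∑ i ∈ s, f i,
      ⟨f, fun i hi => hf i (Finset.mem_insert_of_mem hi), rfl⟩, ?_⟩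
    rw [Finset.sum_insert ha]
  · rintro ⟨u, hu, v, ⟨g, hg, rfl⟩, rfl⟩
    refine ⟨Function.update g a u, ?_, ?_⟩
    · intro i hi
      rcases Finset.mem_insert.1 hi with rfl | his
      · simpa using hu
      · have : i ≠ a := fun hia => ha (hia ▸ his)
        rw [Function.update_of_ne this]
        exact hg i his
    · rw [Finset.sum_insert ha, Function.update_self]
      have hupd : ∑ i ∈ s, Function.update g a u i = ∑ i ∈ s, g i :=
        Finset.sum_congr rfl fun i hi =>
          Function.update_of_ne (fun hia : i = a => ha (hia ▸ hi)) u g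
      rw [hupd]

private lemma isLatticePoly_minkSumOver' {d r : ℕ} (Δ : Fin r → Set (Fin d → ℝ))
    (hΔ : ∀ i, IsLatticePoly (Δ i)) (s : Finset (Fin r)) :
    IsLatticePoly (minkSumOver s Δ) := by
  classical
  induction s using Finset.induction_on with
  | empty =>
      rw [minkSumOver_empty']
      refine ⟨{0}, Finset.singleton_nonempty 0, ?_, by simp⟩
      intro v hv
      rw [Finset.mem_singleton] at hv
      subst hv
      exact fun k => ⟨0, by simp⟩
  | @insert a s ha ih =>
      rw [minkSumOver_insert' Δ a s ha]
      exact isLatticePoly_add' (hΔ a) ih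

private lemma convex_nefDual' {d r : ℕ} (Δ : Fin r → Set (Fin d → ℝ)) (i : Fin r) :
    Convex ℝ (nefDual Δ i) := by
  intro u hu v hv a b ha hb hab
  intro j x hx
  have h1 := hu j x hx
  have h2 := hv j x hx
  have h3 : pairR x (a • u + b • v) = a * pairR x u + b * pairR x v := by
    rw [pairR_comm', pairR_combo', pairR_comm' u x, pairR_comm' v x]
  rw [h3]
  have h4 : a * (-if i = j then (1:ℝ) else 0) + b * (-if i = j then (1:ℝ) else 0)
      = -if i = j then (1:ℝ) else 0 := by rw [← add_mul, hab, one_mul]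
  linarith [mul_le_mul_of_nonneg_left h1 ha, mul_le_mul_of_nonneg_left h2 hb]

end AuxCollecting

/-- Collecting a nef-partition along a partition `I_1, …, I_l` of
`{1, …, r}` yields a centered nef-partition `Δ^{I_1}, …, Δ^{I_l}` of `Δ` whose dual
centered nef-partition is `∇_{I_1}, …, ∇_{I_l}` (convex hulls). -/
theorem nef_partition_collecting {d r l : ℕ}
    (Δ Nb : Fin r → Set (Fin d → ℝ))
    (h : AreDualNefPartitions Δ Nb)
    (I : Fin l → Finset (Fin r))
    (hne : ∀ k, (I k).Nonempty)
    (hdisj : ∀ k k', k ≠ k' → Disjoint (I k) (I k'))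
    (hcover : ∀ i : Fin r, ∃ k, i ∈ I k) :
    IsCenteredNefPartition (fun k => minkSumOver (I k) Δ) ∧
    minkSum (fun k => minkSumOver (I k) Δ) = minkSum Δ ∧
    (∀ k, convexHull ℝ (⋃ i ∈ I k, Nb i) =
      nefDual (fun k' => minkSumOver (I k') Δ) k) := by
  classical
  obtain ⟨hΔcnp, hNbcnp, hNbDef, hΔDef⟩ := h
  obtain ⟨hΔmem, hΔrefl, hΔuniq⟩ := hΔcnp
  obtain ⟨hNbmem, hNbrefl, hNbuniq⟩ := hNbcnp
  -- the partition of `univ : Finset (Fin r)`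
  have hUniv : (Finset.univ : Finset (Fin r)) = Finset.univ.biUnion I := by
    ext i
    simp only [Finset.mem_univ, true_iff, Finset.mem_biUnion]
    obtain ⟨k, hk⟩ := hcover i
    exact ⟨k, trivial, hk⟩
  have hPD : (↑(Finset.univ : Finset (Fin l)) : Set (Fin l)).PairwiseDisjoint I :=
    fun a _ b _ hab => hdisj a b hab
  have hpartR : ∀ g : Fin r → ℝ, ∑ i, g i = ∑ k, ∑ i ∈ I k, g i := by
    intro g
    conv_lhs => rw [hUniv]
    exact Finset.sum_biUnion hPD
  have hpartV : ∀ g : Fin r → (Fin d → ℝ), ∑ i, g i = ∑ k, ∑ i ∈ I k, g i := by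
    intro g
    conv_lhs => rw [hUniv]
    exact Finset.sum_biUnion hPD
  -- the Minkowski sums agree
  have hMS : minkSum (fun k => minkSumOver (I k) Δ) = minkSum Δ := by
    ext x
    constructor
    · rintro ⟨g, hg, rfl⟩
      choose f hf1 hf2 using hg
      choose κ hκ using hcover
      refine ⟨fun i => f (κ i) i, fun i => hf1 (κ i) i (hκ i), ?_⟩
      rw [hpartV (fun i => f (κ i) i)]
      refine Finset.sum_congr rfl fun k _ => ?_
      rw [hf2 k]
      refine Finset.sum_congr rfl fun i hi => ?_
      have hκi : κ i = k := by
        by_contra hc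
        exact (Finset.disjoint_left.1 (hdisj (κ i) k hc) (hκ i)) hi
      rw [hκi]
    · rintro ⟨f, hf, rfl⟩
      exact ⟨fun k => ∑ i ∈ I k, f i, fun k => ⟨f, fun i _ => hf i, rfl⟩, hpartV f⟩
  refine ⟨⟨?_, ?_, ?_⟩, hMS, ?_⟩
  · -- each collected piece is a lattice polytope containing 0
    intro k
    refine ⟨isLatticePoly_minkSumOver' Δ (fun i => (hΔmem i).1) (I k), ?_⟩
    exact ⟨fun _ => 0, fun i _ => (hΔmem i).2, by simp⟩
  · rw [hMS]; exact hΔrefl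
  · intro x hx hxi
    rw [hMS] at hxi
    exact hΔuniq x hx hxi
  -- the dual nef-partition
  intro k
  apply Set.Subset.antisymm
  · -- easy inclusion
    apply convexHull_min
    · intro y hy
      simp only [Set.mem_iUnion] at hy
      obtain ⟨i, hik, hyi⟩ := hy
      rw [hNbDef i] at hyi
      intro k' x hx
      obtain ⟨f, hf, rfl⟩ := hx
      rw [pairR_sum_left']
      have hb : ∀ j ∈ I k', -(if i = j then (1:ℝ) else 0) ≤ pairR (f j) y :=
        fun j hj => hyi j (f j) (hf j hj)
      have hsum : ∑ j ∈ I k', -(if i = j then (1:ℝ) else 0)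
          = -(if k = k' then (1:ℝ) else 0) := by
        rw [Finset.sum_neg_distrib, Finset.sum_ite_eq]
        by_cases hkk : k = k'
        · subst hkk; simp [hik]
        · have hiIk' : i ∉ I k' := Finset.disjoint_left.1 (hdisj k k' hkk) hik
          simp [hkk, hiIk']
      rw [← hsum]
      exact Finset.sum_le_sum hb
    · exact convex_nefDual' _ k
  · -- hard inclusion
    intro y hy
    -- vertex sets of the Δ j
    choose W hWne hWlat hWeq using fun j => (hΔmem j).1
    set m : Fin r → (Fin d → ℝ) → ℝ :=
      fun j z => (W j).inf' (hWne j) (fun w => pairR w z) with hm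
    have hm_le : ∀ j (z : Fin d → ℝ), ∀ x ∈ Δ j, m j z ≤ pairR x z := by
      intro j z x hx
      rw [hWeq j] at hx
      refine pairR_le_of_mem_convexHull' ?_ hx
      intro w hw
      exact Finset.inf'_le _ hw
    have hm_ex : ∀ j (z : Fin d → ℝ), ∃ w, w ∈ Δ j ∧ IsLatticePt w ∧ pairR w z = m j z := by
      intro j z
      obtain ⟨w, hw, hweq⟩ := Finset.exists_mem_eq_inf' (hWne j) (fun w => pairR w z)
      exact ⟨w, (hWeq j).symm ▸ subset_convexHull ℝ _ hw, hWlat j w hw, hweq.symm⟩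
    have hm_np : ∀ j (z : Fin d → ℝ), m j z ≤ 0 := by
      intro j z
      have := hm_le j z 0 (hΔmem j).2
      rwa [pairR_zero_left'] at this
    have hΔsub : ∀ j k', j ∈ I k' → Δ j ⊆ minkSumOver (I k') Δ := by
      intro j k' hj x hx
      refine ⟨fun i => if i = j then x else 0, fun i _ => ?_, ?_⟩
      · by_cases hij : i = j
        · simp [hij, hx]
        · simp [hij, (hΔmem i).2]
      · rw [Finset.sum_ite_eq' (I k') j (fun _ => x)]
        simp [hj]
    have hy_np : ∀ j k', k ≠ k' → j ∈ I k' → m j y = 0 := by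
      intro j k' hkk hj
      refine le_antisymm (hm_np j y) ?_
      obtain ⟨w, hwΔ, -, hwm⟩ := hm_ex j y
      have h1 := hy k' w (hΔsub j k' hj hwΔ)
      rw [if_neg hkk] at h1
      rw [← hwm]
      simpa using h1
    have hy0 : ∀ j, j ∉ I k → m j y = 0 := by
      intro j hj
      obtain ⟨k', hk'⟩ := hcover j
      have hkk : k ≠ k' := by rintro rfl; exact hj hk'
      exact hy_np j k' hkk hk'
    set T : ℝ := ∑ j ∈ I k, -(m j y) with hT
    have hT0 : 0 ≤ T := Finset.sum_nonneg fun j _ => neg_nonneg.2 (hm_np j y)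
    have hTmy : ∑ j ∈ I k, m j y = -T := by
      rw [hT, ← Finset.sum_neg_distrib]
      simp
    have hT1 : T ≤ 1 := by
      choose wa hwaΔ hwal hwam using fun j => hm_ex j y
      have hmem : (∑ j ∈ I k, wa j) ∈ minkSumOver (I k) Δ := ⟨wa, fun i _ => hwaΔ i, rfl⟩
      have h1 := hy k (∑ j ∈ I k, wa j) hmem
      rw [if_pos rfl, pairR_sum_left'] at h1
      have h2 : ∑ j ∈ I k, pairR (wa j) y = ∑ j ∈ I k, m j y :=
        Finset.sum_congr rfl fun j _ => hwam j
      rw [h2, hTmy] at h1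
      linarith
    rcases eq_or_lt_of_le hT0 with hTz | hTpos
    · -- case T = 0 : y lies in every ∇_i with i ∈ I k
      have hallz : ∀ j ∈ I k, -(m j y) = 0 :=
        (Finset.sum_eq_zero_iff_of_nonneg (fun j _ => neg_nonneg.2 (hm_np j y))).1 hTz.symm
      obtain ⟨i0, hi0⟩ := hne k
      have hyNb : y ∈ Nb i0 := by
        rw [hNbDef i0]
        intro j x hx
        have h1 : m j y = 0 := by
          by_cases hjk : j ∈ I k
          · have := hallz j hjk; linarith
          · exact hy0 j hjk
        have h2 := hm_le j y x hx
        have h3 : (0:ℝ) ≤ pairR x y := by rw [h1] at h2; exact h2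
        have h4 : -(if i0 = j then (1:ℝ) else 0) ≤ 0 := by split <;> norm_num
        linarith
      exact subset_convexHull ℝ _ (Set.mem_iUnion₂.2 ⟨i0, hi0, hyNb⟩)
    · -- case T > 0
      have hTne : T ≠ 0 := ne_of_gt hTpos
      set y' : Fin d → ℝ := T⁻¹ • y with hy'def
      have hm_smul : ∀ j (c : ℝ), 0 ≤ c → ∀ z, m j (c • z) = c * m j z := by
        intro j c hc z
        refine le_antisymm ?_ ?_
        · obtain ⟨w, hwΔ, -, hwm⟩ := hm_ex j z
          calc m j (c • z) ≤ pairR w (c • z) := hm_le j (c • z) w hwΔ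
            _ = c * pairR w z := by
                rw [pairR_comm', pairR_smul_left', pairR_comm']
            _ = c * m j z := by rw [hwm]
        · obtain ⟨w, hwΔ, -, hwm⟩ := hm_ex j (c • z)
          have h1 : m j z ≤ pairR w z := hm_le j z w hwΔ
          have h2 : pairR w (c • z) = c * pairR w z := by
            rw [pairR_comm', pairR_smul_left', pairR_comm']
          rw [← hwm, h2]
          exact mul_le_mul_of_nonneg_left h1 hc
      have hmy' : ∀ j, m j y' = T⁻¹ * m j y :=
        fun j => hm_smul j T⁻¹ (inv_nonneg.2 hT0) y
      have hy'0 : ∀ j, j ∉ I k → m j y' = 0 := by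
        intro j hj
        rw [hmy' j, hy0 j hj, mul_zero]
      have hy'k : ∑ j ∈ I k, m j y' = -1 := by
        have h1 : ∑ j ∈ I k, m j y' = T⁻¹ * ∑ j ∈ I k, m j y := by
          rw [Finset.mul_sum]
          exact Finset.sum_congr rfl fun j _ => hmy' j
        rw [h1, hTmy]
        field_simp
      have hy'all : ∑ j, m j y' = -1 := by
        rw [hpartR (fun j => m j y')]
        rw [Finset.sum_eq_single_of_mem k (Finset.mem_univ k) ?side]
        · exact hy'k
        case side =>
          intro k' _ hk'
          exact Finset.sum_eq_zero fun j hj =>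
            hy'0 j (Finset.disjoint_left.1 (hdisj k' k hk') hj)
      have hy'dual : y' ∈ dualPoly (minkSum Δ) := by
        rintro x ⟨f, hf, rfl⟩
        rw [pairR_sum_left']
        have h1 : ∑ j, m j y' ≤ ∑ j, pairR (f j) y' :=
          Finset.sum_le_sum fun j _ => hm_le j y' (f j) (hf j)
        rw [hy'all] at h1
        exact h1
      obtain ⟨V, hVne, hVlat, hVeq⟩ := hΔrefl.2.2
      rw [hVeq, Finset.mem_convexHull'] at hy'dual
      obtain ⟨μ, hμ0, hμ1, hμs⟩ := hy'dual
      have hVd : ∀ v ∈ V, (v : Fin d → ℝ) ∈ dualPoly (minkSum Δ) := by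
        intro v hv
        rw [hVeq]
        exact subset_convexHull ℝ _ hv
      have hBle : ∀ v ∈ V, ∑ j, -(m j v) ≤ 1 := by
        intro v hv
        choose wa hwaΔ hwal hwam using fun j => hm_ex j v
        have hmem : (∑ j, wa j) ∈ minkSum Δ := ⟨wa, fun i => hwaΔ i, rfl⟩
        have h1 := hVd v hv _ hmem
        rw [pairR_sum_left'] at h1
        have h2 : ∑ j, pairR (wa j) v = ∑ j, m j v :=
          Finset.sum_congr rfl fun j _ => hwam j
        rw [h2] at h1
        rw [Finset.sum_neg_distrib]
        linarith
      have hsup : ∀ j, ∑ v ∈ V, μ v * m j v ≤ m j y' := by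
        intro j
        obtain ⟨w, hwΔ, -, hwm⟩ := hm_ex j y'
        rw [← hwm, pairR_comm', ← hμs, pairR_sum_left']
        refine Finset.sum_le_sum fun v hv => ?_
        rw [pairR_smul_left']
        have h1 : m j v ≤ pairR v w := by
          rw [← pairR_comm']
          exact hm_le j v w hwΔ
        exact mul_le_mul_of_nonneg_left h1 (hμ0 v hv)
      have hjle : ∀ j, -(m j y') ≤ ∑ v ∈ V, μ v * -(m j v) := by
        intro j
        have h1 : ∑ v ∈ V, μ v * -(m j v) = -(∑ v ∈ V, μ v * m j v) := by
          rw [← Finset.sum_neg_distrib]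
          exact Finset.sum_congr rfl fun v _ => (mul_neg _ _)
        rw [h1]
        have := hsup j
        linarith
      have hS1 : ∑ j, -(m j y') = 1 := by
        rw [Finset.sum_neg_distrib, hy'all]
        norm_num
      have hS2 : ∑ j, ∑ v ∈ V, μ v * -(m j v) ≤ 1 := by
        rw [Finset.sum_comm]
        calc ∑ v ∈ V, ∑ j, μ v * -(m j v)
            = ∑ v ∈ V, μ v * ∑ j, -(m j v) := by
              exact Finset.sum_congr rfl fun v _ => (Finset.mul_sum _ _ _).symm
          _ ≤ ∑ v ∈ V, μ v * 1 :=
              Finset.sum_le_sum fun v hv =>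
                mul_le_mul_of_nonneg_left (hBle v hv) (hμ0 v hv)
          _ = 1 := by simp only [mul_one]; exact hμ1
      have hEq : ∀ j, -(m j y') = ∑ v ∈ V, μ v * -(m j v) := by
        have hterm : ∀ j ∈ (Finset.univ : Finset (Fin r)),
            0 ≤ ∑ v ∈ V, μ v * -(m j v) - -(m j y') :=
          fun j _ => sub_nonneg.2 (hjle j)
        have hsz : ∑ j, (∑ v ∈ V, μ v * -(m j v) - -(m j y')) = 0 := by
          rw [Finset.sum_sub_distrib, hS1]
          have : ∑ j, ∑ v ∈ V, μ v * -(m j v) = 1 := by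
            refine le_antisymm hS2 ?_
            calc (1:ℝ) = ∑ j, -(m j y') := hS1.symm
              _ ≤ ∑ j, ∑ v ∈ V, μ v * -(m j v) := Finset.sum_le_sum fun j _ => hjle j
          rw [this]; ring
        have hall := (Finset.sum_eq_zero_iff_of_nonneg hterm).1 hsz
        intro j
        have := hall j (Finset.mem_univ j)
        linarith
      have hVsum1 : ∀ v ∈ V, μ v ≠ 0 → ∑ j, -(m j v) = 1 := by
        have htot : ∑ v ∈ V, μ v * ∑ j, -(m j v) = 1 := by
          have h1 : ∑ j, ∑ v ∈ V, μ v * -(m j v) = 1 := by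
            rw [← hS1]
            exact (Finset.sum_congr rfl fun j _ => (hEq j).symm)
          rw [← h1, Finset.sum_comm]
          exact Finset.sum_congr rfl fun v _ => Finset.mul_sum _ _ _
        have hterm : ∀ v ∈ V, 0 ≤ μ v * (1 - ∑ j, -(m j v)) :=
          fun v hv => mul_nonneg (hμ0 v hv) (sub_nonneg.2 (hBle v hv))
        have hzero : ∑ v ∈ V, μ v * (1 - ∑ j, -(m j v)) = 0 := by
          have : ∀ v ∈ V, μ v * (1 - ∑ j, -(m j v))
              = μ v - μ v * ∑ j, -(m j v) := fun v _ => by ring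
          rw [Finset.sum_congr rfl this, Finset.sum_sub_distrib, hμ1, htot]
          ring
        intro v hv hμv
        have h1 := (Finset.sum_eq_zero_iff_of_nonneg hterm).1 hzero v hv
        rcases mul_eq_zero.1 h1 with h | h
        · exact absurd h hμv
        · linarith
      have hBoff : ∀ j, j ∉ I k → ∀ v ∈ V, μ v ≠ 0 → m j v = 0 := by
        intro j hj v hv hμv
        have h1 : ∑ v ∈ V, μ v * -(m j v) = 0 := by
          rw [← hEq j, hy'0 j hj]
          ring
        have hterm : ∀ v ∈ V, 0 ≤ μ v * -(m j v) :=
          fun v hv => mul_nonneg (hμ0 v hv) (neg_nonneg.2 (hm_np j v))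
        have h2 := (Finset.sum_eq_zero_iff_of_nonneg hterm).1 h1 v hv
        rcases mul_eq_zero.1 h2 with hh | hh
        · exact absurd hh hμv
        · linarith
      have hvin : ∀ v ∈ V, μ v ≠ 0 → v ∈ ⋃ i ∈ I k, Nb i := by
        intro v hv hμv
        have hsumk : ∑ j ∈ I k, -(m j v) = 1 := by
          rw [← hVsum1 v hv hμv]
          refine Finset.sum_subset (Finset.subset_univ (I k)) ?_
          intro j _ hj
          rw [hBoff j hj v hv hμv]
          ring
        have hex : ∃ j0 ∈ I k, -(m j0 v) ≠ 0 := by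
          by_contra hcon
          push_neg at hcon
          rw [Finset.sum_eq_zero hcon] at hsumk
          norm_num at hsumk
        obtain ⟨j0, hj0k, hj0ne⟩ := hex
        have hj0ge : (1:ℝ) ≤ -(m j0 v) := by
          have hzex : ∃ z : ℤ, m j0 v = (z:ℝ) := by
            obtain ⟨w, -, hwl, hwm⟩ := hm_ex j0 v
            obtain ⟨z, hz⟩ := pairR_int' hwl (hVlat v hv)
            exact ⟨z, by rw [← hwm, hz]⟩
          obtain ⟨z, hz⟩ := hzex
          have h1 : (0:ℝ) ≤ -(m j0 v) := neg_nonneg.2 (hm_np j0 v)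
          have h2 : (0:ℝ) < -(m j0 v) := lt_of_le_of_ne h1 (Ne.symm hj0ne)
          rw [hz] at h2 ⊢
          have h3 : (0:ℤ) < -z := by exact_mod_cast h2
          have h4 : (1:ℤ) ≤ -z := h3
          exact_mod_cast h4
        have hsplit : -(m j0 v) + ∑ j ∈ (I k).erase j0, -(m j v) = 1 := by
          rw [Finset.add_sum_erase (I k) (fun j => -(m j v)) hj0k]
          exact hsumk
        have hnn : ∀ j ∈ (I k).erase j0, 0 ≤ -(m j v) :=
          fun j _ => neg_nonneg.2 (hm_np j v)
        have herase0 : ∑ j ∈ (I k).erase j0, -(m j v) = 0 := by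
          have hle : ∑ j ∈ (I k).erase j0, -(m j v) ≤ 0 := by linarith
          exact le_antisymm hle (Finset.sum_nonneg hnn)
        have hrest : ∀ j ∈ (I k).erase j0, -(m j v) = 0 :=
          (Finset.sum_eq_zero_iff_of_nonneg hnn).1 herase0
        have hj0v : -(m j0 v) = 1 := by
          rw [herase0] at hsplit
          linarith
        have hvNb : v ∈ Nb j0 := by
          rw [hNbDef j0]
          intro j x hx
          have hle := hm_le j v x hx
          by_cases hj : j0 = j
          · subst hj
            rw [if_pos rfl]
            linarith
          · have hz : m j v = 0 := by
              by_cases hjk : j ∈ I k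
              · have hje : j ∈ (I k).erase j0 :=
                  Finset.mem_erase.2 ⟨fun hh => hj hh.symm, hjk⟩
                have := hrest j hje
                linarith
              · exact hBoff j hjk v hv hμv
            rw [if_neg hj]
            linarith
        exact Set.mem_iUnion₂.2 ⟨j0, hj0k, hvNb⟩
      have hy'C : y' ∈ convexHull ℝ (⋃ i ∈ I k, Nb i) := by
        rw [← hμs]
        set V' := V.filter (fun v => μ v ≠ 0) with hV'
        have hsum_eq : ∑ v ∈ V', μ v • v = ∑ v ∈ V, μ v • v := by
          refine Finset.sum_subset (Finset.filter_subset _ _) ?_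
          intro v hv hv'
          have hzv : μ v = 0 := by
            by_contra hc
            exact hv' (Finset.mem_filter.2 ⟨hv, hc⟩)
          rw [hzv, zero_smul]
        have hw1 : ∑ v ∈ V', μ v = 1 := by
          rw [← hμ1]
          refine Finset.sum_subset (Finset.filter_subset _ _) ?_
          intro v hv hv'
          by_contra hc
          exact hv' (Finset.mem_filter.2 ⟨hv, hc⟩)
        rw [← hsum_eq]
        refine (convex_convexHull ℝ _).sum_mem
          (fun v hv => hμ0 v (Finset.filter_subset _ _ hv)) hw1 ?_
        intro v hv
        obtain ⟨hvV, hvne⟩ := Finset.mem_filter.1 hv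
        exact subset_convexHull ℝ _ (hvin v hvV hvne)
      have h0C : (0 : Fin d → ℝ) ∈ convexHull ℝ (⋃ i ∈ I k, Nb i) := by
        obtain ⟨i0, hi0⟩ := hne k
        exact subset_convexHull ℝ _ (Set.mem_iUnion₂.2 ⟨i0, hi0, (hNbmem i0).2⟩)
      have hconv := (convex_convexHull ℝ (⋃ i ∈ I k, Nb i)) hy'C h0C
        (le_of_lt hTpos) (by linarith : (0:ℝ) ≤ 1 - T) (by ring)
      have hyy : T • y' + (1 - T) • (0 : Fin d → ℝ) = y := by
        rw [smul_zero, add_zero, hy'def, smul_inv_smul₀ hTne]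
      rwa [hyy] at hconv
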